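/- Orthogonality of Dirichlet characters: for a fixed modulus N and units a, b in ℤ/Nℤ, (1/φ(N)) · ∑_{χ mod N} χ(a) · conj(χ(b)) equals 1 if a = b and 0 otherwise, where the sum is over all Dirichlet characters modulo N. -/
import Mathlib

theorem stmt_8 (N : ℕ) [NeZero N] (a b : (ZMod N)ˣ) :
    letI : Fintype (DirichletCharacter ℂ N) := Fintype.ofFinite _
    (1 / (Nat.totient N : ℂ)) *
        ∑ χ : DirichletCharacter ℂ N, χ a * starRingEnd ℂ (χ b) =
      if a = b then 1 else 0 := by
  have key : ∀ χ : DirichletCharacter ℂ N,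
      χ a * starRingEnd ℂ (χ b) = χ ((a * b⁻¹ : (ZMod N)ˣ) : ZMod N) := by
    intro χ
    have h1 : starRingEnd ℂ (χ b) = χ⁻¹ (b : ZMod N) := MulChar.star_apply' χ b
    rw [h1, MulChar.inv_apply_eq_inv']
    have h2 : χ ((b : ZMod N)) * χ ((b⁻¹ : (ZMod N)ˣ) : ZMod N) = 1 := by
      rw [← map_mul]; norm_cast; rw [mul_inv_cancel]; exact χ.map_one
    rw [inv_eq_of_mul_eq_one_right h2, ← map_mul]; norm_cast
  rw [Finset.sum_congr rfl fun χ _ => key χ]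
  have := DirichletCharacter.sum_characters_eq ℂ ((a * b⁻¹ : (ZMod N)ˣ) : ZMod N)
  rw [Finset.sum_congr rfl fun χ _ => rfl, this]
  have hiff : ((a * b⁻¹ : (ZMod N)ˣ) : ZMod N) = 1 ↔ a = b := by
    rw [← Units.val_one, ← Units.ext_iff, mul_inv_eq_one]
  have ht : (Nat.totient N : ℂ) ≠ 0 := by
    exact_mod_cast (Nat.totient_pos.mpr (Nat.pos_of_ne_zero (NeZero.ne N))).ne'
  split_ifs with h1 h2 h2
  · field_simp
  · exact absurd (hiff.mp h1) h2
  · exact absurd (hiff.mpr h2) h1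
  · simp
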